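/- Let n ≥ 1, 1 ≤ k ≤ n, and 0 ≤ j < 2^n. For every x ∈ (0,1], G_{n,j}(x + (−1)^{ε_k(x)}·2^{−k}) = G_{n,j'}(x), where j' = j XOR 2^{n−k} (j with its k-th most significant of n binary digits flipped). In other words, composing a dyadic-step indicator with the k-th bit-flip map permutes the functions G_{n,j} according to flipping the k-th bit of the index. -/

import Mathlib

open MeasureTheory Set

noncomputable section

/-- The `k`-th binary digit of `x ∈ (0,1]`: `ε_k(x) = (⌈2^k x⌉ − 1) mod 2`. -/
def eps (k : ℕ) (x : ℝ) : ℤ := (⌈(2 : ℝ) ^ k * x⌉ - 1) % 2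

/-- `G`, the indicator function of `(0,1]`. -/
def Gfun : ℝ → ℝ := Set.indicator (Set.Ioc 0 1) 1

/-- `G_{n,j}(x) = 2^{n/2} G(2^n x − j)`. -/
def Gnj (n j : ℕ) (x : ℝ) : ℝ := Real.sqrt 2 ^ n * Gfun ((2 : ℝ) ^ n * x - j)

lemma my_xor_pow_false {m d : ℕ} (h : m.testBit d = false) : m ^^^ 2 ^ d = m + 2 ^ d := by
  have hd2 : m / 2 ^ d % 2 = 0 := by
    simpa [Nat.testBit_eq_decide_div_mod_eq] using h
  have hr : m % 2 ^ (d + 1) < 2 ^ d := by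
    rw [pow_succ, Nat.mod_mul, hd2]
    simpa using Nat.mod_lt m (Nat.two_pow_pos d)
  apply Nat.eq_of_testBit_eq
  intro i
  rw [Nat.testBit_xor, Nat.testBit_two_pow]
  rcases lt_trichotomy i d with hi | rfl | hi
  · rw [Nat.add_comm, Nat.testBit_two_pow_add_gt hi]
    simp [Nat.ne_of_gt hi]
  · rw [Nat.add_comm, Nat.testBit_two_pow_add_eq, h]
    simp
  · have hdm : 2 ^ (d + 1) * (m / 2 ^ (d + 1)) + m % 2 ^ (d + 1) = m :=
      Nat.div_add_mod m (2 ^ (d + 1))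
    have hps : (2:ℕ) ^ (d + 1) = 2 ^ d * 2 := pow_succ 2 d
    have hb : m % 2 ^ (d + 1) + 2 ^ d < 2 ^ (d + 1) := by omega
    have h1 : (m + 2 ^ d).testBit i = (m / 2 ^ (d + 1)).testBit (i - (d + 1)) := by
      rw [show m + 2 ^ d = 2 ^ (d + 1) * (m / 2 ^ (d + 1)) + (m % 2 ^ (d + 1) + 2 ^ d) by omega,
        Nat.testBit_two_pow_mul_add _ hb, if_neg (by omega)]
    have h2 : m.testBit i = (m / 2 ^ (d + 1)).testBit (i - (d + 1)) := by
      conv_lhs => rw [← hdm]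
      rw [Nat.testBit_two_pow_mul_add _ (Nat.mod_lt m (Nat.two_pow_pos _)), if_neg (by omega)]
    rw [h1, h2, decide_eq_false (by omega : ¬ d = i)]
    simp

lemma my_xor_pow_true {m d : ℕ} (h : m.testBit d = true) : (m ^^^ 2 ^ d) + 2 ^ d = m := by
  have h2 : (m ^^^ 2 ^ d).testBit d = false := by
    simp [Nat.testBit_xor, h, Nat.testBit_two_pow_self]
  have h3 := my_xor_pow_false h2
  rw [xor_cancel_right] at h3
  omega

lemma Gfun_int (M a : ℤ) (t : ℝ) (h1 : (M : ℝ) < t) (h2 : t ≤ (M : ℝ) + 1) :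
    Gfun (t - a) = if a = M then 1 else 0 := by
  unfold Gfun
  by_cases h : a = M
  · subst h
    rw [if_pos rfl, Set.indicator_of_mem]
    · rfl
    · simp only [mem_Ioc]
      constructor <;> linarith
  · rw [if_neg h, Set.indicator_of_notMem]
    simp only [mem_Ioc, not_and, not_le]
    intro h0
    by_contra h3
    push_neg at h3
    have hb1 : a < M + 1 := by exact_mod_cast (by push_cast; linarith : (a:ℝ) < ((M+1 : ℤ):ℝ))
    have hb2 : M < a + 1 := by exact_mod_cast (by push_cast; linarith : (M:ℝ) < ((a+1 : ℤ):ℝ))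
    omega

/-- Composing `G_{n,j}` with the `k`-th bit-flip map `x ↦ x + (−1)^{ε_k(x)} 2^{−k}`
gives `G_{n,j'}` where `j' = j XOR 2^{n−k}`. -/
theorem stmt3 (n k : ℕ) (hn : 1 ≤ n) (hk1 : 1 ≤ k) (hkn : k ≤ n)
    (j : ℕ) (hj : j < 2 ^ n) (x : ℝ) (hx : x ∈ Set.Ioc (0 : ℝ) 1) :
    Gnj n j (x + (-1 : ℝ) ^ eps k x * (2 : ℝ) ^ (-(k : ℤ))) = Gnj n (j ^^^ 2 ^ (n - k)) x := by
  obtain ⟨hx0, hx1⟩ := hx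
  set d := n - k with hd
  set t : ℝ := (2 : ℝ) ^ n * x with ht
  have htpos : 0 < t := by positivity
  have ht1 : t ≤ 2 ^ n := by
    rw [ht]; nlinarith [pow_pos (by norm_num : (0:ℝ) < 2) n]
  set M : ℤ := ⌈t⌉ - 1 with hM
  have hMt : (M : ℝ) < t := by
    rw [hM]; push_cast; linarith [Int.ceil_lt_add_one t]
  have htM : t ≤ (M : ℝ) + 1 := by
    rw [hM]; push_cast; linarith [Int.le_ceil t]
  have hM0 : 0 ≤ M := by
    have : (0 : ℤ) < ⌈t⌉ := Int.lt_ceil.mpr (by exact_mod_cast htpos)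
    omega
  set m : ℕ := M.toNat with hm
  have hmM : (m : ℤ) = M := Int.toNat_of_nonneg hM0
  have hmt : (m : ℝ) < t := by
    have : ((m : ℤ) : ℝ) = (m : ℝ) := by push_cast; ring
    rw [← this, hmM]; exact hMt
  have htm : t ≤ (m : ℝ) + 1 := by
    have : ((m : ℤ) : ℝ) = (m : ℝ) := by push_cast; ring
    rw [← hmM] at htM; rw [this] at htM; exact htM
  -- key ceiling computation
  have hdk : k + d = n := by omega
  have h2d : (2 : ℝ) ^ k * (2 : ℝ) ^ d = (2 : ℝ) ^ n := by rw [← pow_add, hdk]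
  have h2dpos : (0 : ℝ) < (2 : ℝ) ^ d := by positivity
  have hkx : (2 : ℝ) ^ k * x = t / 2 ^ d := by
    rw [ht, ← h2d]; field_simp
  set q : ℕ := m / 2 ^ d with hq
  have hq1 : (q : ℝ) * 2 ^ d ≤ (m : ℝ) := by
    exact_mod_cast Nat.div_mul_le_self m (2 ^ d)
  have hq2 : (m : ℝ) + 1 ≤ ((q : ℝ) + 1) * 2 ^ d := by
    have hmod : 2 ^ d * q + m % 2 ^ d = m := by rw [hq]; exact Nat.div_add_mod m (2 ^ d)
    have hlt := Nat.mod_lt m (Nat.two_pow_pos d)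
    have hnat : m + 1 ≤ (q + 1) * 2 ^ d := by
      have : (q + 1) * 2 ^ d = 2 ^ d * q + 2 ^ d := by ring
      omega
    exact_mod_cast hnat
  have hceil : ⌈(2 : ℝ) ^ k * x⌉ = (q : ℤ) + 1 := by
    rw [Int.ceil_eq_iff]
    have hcast : (((q : ℤ) + 1 : ℤ) : ℝ) = (q : ℝ) + 1 := by push_cast; ring
    rw [hcast]
    constructor
    · rw [hkx, lt_div_iff₀ h2dpos]; nlinarith
    · rw [hkx, div_le_iff₀ h2dpos]; nlinarith
  -- eps value
  set b : ℕ := q % 2 with hb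
  have heps : eps k x = (b : ℤ) := by
    rw [eps, hceil, hb]; push_cast; omega
  have hb01 : b = 0 ∨ b = 1 := by omega
  have htb : m.testBit d = decide (b = 1) := by
    rw [Nat.testBit_eq_decide_div_mod_eq, ← hq, ← hb]
  set P : ℕ := 2 ^ d with hP
  set SZ : ℤ := if b = 0 then 1 else -1 with hSZ
  have hpow : (-1 : ℝ) ^ eps k x = (SZ : ℝ) := by
    rw [heps, hSZ]
    rcases hb01 with h | h <;> simp [h]
  have h2nk : (2 : ℝ) ^ n * (2 : ℝ) ^ (-(k : ℤ)) = (2 : ℝ) ^ d := by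
    rw [show ((2:ℝ)^n) = (2:ℝ)^((n:ℤ)) from (zpow_natCast 2 n).symm,
      ← zpow_add₀ (by norm_num : (2:ℝ) ≠ 0)]
    rw [show (n : ℤ) + -(k : ℤ) = (d : ℤ) by omega, zpow_natCast]
  set A : ℤ := (j : ℤ) - SZ * (P : ℤ) with hA
  have harg : (2 : ℝ) ^ n * (x + (-1 : ℝ) ^ eps k x * (2 : ℝ) ^ (-(k : ℤ))) - j
      = t - (A : ℝ) := by
    rw [hpow, ht, mul_add, mul_left_comm, h2nk, hA]
    push_cast [hP]
    ring
  rw [Gnj, Gnj, harg, ← ht, Gfun_int M _ t hMt htM,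
    show ((j ^^^ P : ℕ) : ℝ) = (((j ^^^ P : ℕ) : ℤ) : ℝ) by push_cast; ring,
    Gfun_int M _ t hMt htM]
  congr 1
  have key : (A = M) ↔ ((j ^^^ P : ℕ) : ℤ) = M := by
    rw [← hmM]
    rcases hb01 with h | h
    · have htf : m.testBit d = false := by rw [htb, h]; simp
      have hxr : m ^^^ P = m + P := by rw [hP]; exact my_xor_pow_false htf
      rw [hA, hSZ, if_pos h]
      constructor
      · intro hje
        have hjv : j = m + P := by omega
        have : j ^^^ P = m := by rw [hjv, ← hxr, xor_cancel_right]
        rw [this]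
      · intro hje
        have hje' : j ^^^ P = m := by exact_mod_cast hje
        have hjv : j = m ^^^ P := by rw [← hje', xor_cancel_right]
        rw [hjv, hxr] at *
        push_cast
        omega
    · have htf : m.testBit d = true := by rw [htb, h]; simp
      have hxr : (m ^^^ P) + P = m := by rw [hP]; exact my_xor_pow_true htf
      rw [hA, hSZ, if_neg (by omega)]
      constructor
      · intro hje
        have hjm : j + P = m := by omega
        have hjv : j = m ^^^ P := by omega
        have : j ^^^ P = m := by rw [hjv, xor_cancel_right]
        rw [this]
      · intro hje
        have hje' : j ^^^ P = m := by exact_mod_cast hje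
        have hjv : j = m ^^^ P := by rw [← hje', xor_cancel_right]
        have : j + P = m := by omega
        omega
  by_cases hc : A = M
  · rw [if_pos hc, if_pos (key.mp hc)]
  · rw [if_neg hc, if_neg (fun h => hc (key.mpr h))]
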